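/- Let a_n = 1 + a/n + o(1/n) with a ≠ 0. Then for each fixed t > 0, (1/n) Σ_{k=1}^{[nt]} a_n^{-2k} → (1 − e^{-2at})/(2a) as n → ∞. -/

import Mathlib

open Filter Real

/-- If `a_n = 1 + a/n + o(1/n)` with `a ≠ 0` (and `a_n > 0` for large `n`), then for each
fixed `t > 0`, `(1/n) ∑_{k=1}^{[nt]} a_n^{-2k} → (1 − e^{-2at})/(2a)` as `n → ∞`. -/
theorem cesaro_sum_inv_pow_tendsto (a : ℝ) (ha : a ≠ 0) (aseq : ℕ → ℝ)
    (hpos : ∀ᶠ n in atTop, 0 < aseq n)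
    (haseq : Tendsto (fun n : ℕ => (n : ℝ) * (aseq n - 1)) atTop (nhds a))
    (t : ℝ) (ht : 0 < t) :
    Tendsto
      (fun n : ℕ => (1 / (n : ℝ)) * ∑ k ∈ Finset.Icc 1 ⌊(n : ℝ) * t⌋₊,
        aseq n ^ (-(2 * (k : ℤ))))
      atTop (nhds ((1 - Real.exp (-2 * a * t)) / (2 * a))) := by
  set r : ℕ → ℝ := fun n => (aseq n ^ 2)⁻¹ with hr_def
  set m : ℕ → ℕ := fun n => ⌊(n : ℝ) * t⌋₊ with hm_def
  -- aseq n → 1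
  have hinv : Tendsto (fun n : ℕ => 1 / (n : ℝ)) atTop (nhds 0) :=
    tendsto_one_div_atTop_nhds_zero_nat
  have h1 : Tendsto aseq atTop (nhds 1) := by
    have h0 : Tendsto (fun n : ℕ => (n : ℝ) * (aseq n - 1) * (1 / n)) atTop (nhds (a * 0)) :=
      haseq.mul hinv
    rw [mul_zero] at h0
    have heq : ∀ᶠ n : ℕ in atTop, (n : ℝ) * (aseq n - 1) * (1 / n) = aseq n - 1 := by
      filter_upwards [eventually_gt_atTop 0] with n hn
      have hn' : (n : ℝ) ≠ 0 := Nat.cast_ne_zero.mpr hn.ne'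
      field_simp
    have h2 : Tendsto (fun n => aseq n - 1) atTop (nhds 0) := h0.congr' heq
    have := h2.add_const 1
    simpa using this
  -- eventually aseq n ≠ 1
  have hne1 : ∀ᶠ n : ℕ in atTop, aseq n ≠ 1 := by
    filter_upwards [haseq.eventually_ne ha, eventually_gt_atTop 0] with n hn hn0
    intro h
    apply hn
    rw [h]; simp
  -- n * log (aseq n) → a
  have hslope : Tendsto (slope Real.log 1) (nhdsWithin 1 {(1:ℝ)}ᶜ) (nhds 1) := by
    have := (Real.hasDerivAt_log one_ne_zero)
    rw [inv_one] at this
    exact hasDerivAt_iff_tendsto_slope.mp this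
  have htos : Tendsto aseq atTop (nhdsWithin 1 {(1:ℝ)}ᶜ) := by
    rw [tendsto_nhdsWithin_iff]
    exact ⟨h1, hne1⟩
  have hslopeseq : Tendsto (fun n => slope Real.log 1 (aseq n)) atTop (nhds 1) :=
    hslope.comp htos
  have hlog : Tendsto (fun n : ℕ => (n : ℝ) * Real.log (aseq n)) atTop (nhds a) := by
    have h0 : Tendsto (fun n : ℕ => (n : ℝ) * (aseq n - 1) * slope Real.log 1 (aseq n))
        atTop (nhds (a * 1)) := haseq.mul hslopeseq
    rw [mul_one] at h0
    refine h0.congr' ?_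
    filter_upwards [hne1] with n hn
    have h1' : aseq n - 1 ≠ 0 := sub_ne_zero.mpr hn
    simp only [slope_def_field, Real.log_one, div_sub_div_same]
    rw [sub_zero]
    field_simp
  -- m n / n → t
  have hmn : Tendsto (fun n : ℕ => (m n : ℝ) / n) atTop (nhds t) := by
    have h := (tendsto_nat_floor_mul_div_atTop (le_of_lt ht)).comp
      (tendsto_natCast_atTop_atTop (R := ℝ))
    refine h.congr fun n => ?_
    simp only [Function.comp, hm_def, mul_comm]
  -- m n * log aseq n → t * a
  have hml : Tendsto (fun n : ℕ => (m n : ℝ) * Real.log (aseq n)) atTop (nhds (t * a)) := by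
    have h0 := hmn.mul hlog
    refine h0.congr' ?_
    filter_upwards [eventually_gt_atTop 0] with n hn
    have hn' : (n : ℝ) ≠ 0 := Nat.cast_ne_zero.mpr hn.ne'
    field_simp
  -- r n ^ m n → exp (-2 a t)
  have hB : Tendsto (fun n => r n ^ m n) atTop (nhds (Real.exp (-2 * a * t))) := by
    have h0 : Tendsto (fun n : ℕ => Real.exp ((-2) * ((m n : ℝ) * Real.log (aseq n))))
        atTop (nhds (Real.exp ((-2) * (t * a)))) :=
      (Real.continuous_exp.tendsto _).comp (hml.const_mul (-2))
    have : (-2 : ℝ) * (t * a) = -2 * a * t := by ring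
    rw [this] at h0
    refine h0.congr' ?_
    filter_upwards [hpos] with n hn
    have hne : aseq n ≠ 0 := hn.ne'
    have hrpos : 0 < r n := by positivity
    rw [← Real.log_injOn_pos.eq_iff (Set.mem_Ioi.mpr (Real.exp_pos _))
      (Set.mem_Ioi.mpr (pow_pos hrpos _))]
    rw [Real.log_exp, Real.log_pow, hr_def]
    simp only [Real.log_inv, Real.log_pow]
    push_cast
    ring
  -- n * (1 - r n) → 2a
  have hA : Tendsto (fun n : ℕ => (n : ℝ) * (1 - r n)) atTop (nhds (2 * a)) := by
    have hfac : Tendsto (fun n => (aseq n + 1) / aseq n ^ 2) atTop (nhds 2) := by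
      have hnum : Tendsto (fun n => aseq n + 1) atTop (nhds 2) := by
        have := h1.add_const 1; norm_num at this; exact this
      have hden : Tendsto (fun n => aseq n ^ 2) atTop (nhds 1) := by
        have := h1.pow 2; norm_num at this; exact this
      have := hnum.div hden one_ne_zero
      rw [div_one] at this; exact this
    have h0 : Tendsto (fun n : ℕ => (n : ℝ) * (aseq n - 1) * ((aseq n + 1) / aseq n ^ 2))
        atTop (nhds (a * 2)) := haseq.mul hfac
    have : a * 2 = 2 * a := by ring
    rw [this] at h0
    refine h0.congr' ?_
    filter_upwards [hpos] with n hn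
    have hne : aseq n ≠ 0 := hn.ne'
    rw [hr_def]
    field_simp
    ring
  -- r n → 1
  have hr1 : Tendsto r atTop (nhds 1) := by
    have := (h1.pow 2).inv₀ (by norm_num)
    norm_num at this
    exact this
  -- combine
  have ha2 : (2 : ℝ) * a ≠ 0 := by positivity
  have hmain : Tendsto (fun n : ℕ => r n * (1 - r n ^ m n) / ((n : ℝ) * (1 - r n)))
      atTop (nhds ((1 - Real.exp (-2 * a * t)) / (2 * a))) := by
    have := (hr1.mul (hB.const_sub 1)).div hA ha2
    rw [one_mul] at this; exact this
  refine hmain.congr' ?_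
  filter_upwards [hpos, hne1, eventually_gt_atTop 0] with n hn hne1' hn0
  have hne : aseq n ≠ 0 := hn.ne'
  have hnR : (n : ℝ) ≠ 0 := Nat.cast_ne_zero.mpr hn0.ne'
  have hrne1 : r n ≠ 1 := by
    rw [hr_def]
    intro h
    have h2 : aseq n ^ 2 = 1 := by
      have := congrArg (·⁻¹) h
      simpa using this
    have : aseq n = 1 := by nlinarith [hn]
    exact hne1' this
  -- rewrite the sum
  have hterm : ∀ k : ℕ, aseq n ^ (-(2 * (k : ℤ))) = r n ^ k := by
    intro k
    rw [hr_def, zpow_neg, inv_pow, ← pow_mul]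
    rw [show (2 * (k : ℤ)) = ((2 * k : ℕ) : ℤ) by push_cast; ring, zpow_natCast]
  have hsum : ∑ k ∈ Finset.Icc 1 (m n), aseq n ^ (-(2 * (k : ℤ)))
      = r n * ((r n ^ m n - 1) / (r n - 1)) := by
    rw [Finset.sum_congr rfl fun k _ => hterm k]
    rw [show Finset.Icc 1 (m n) = Finset.Ico 1 (m n + 1) by rw [Finset.Ico_add_one_right_eq_Icc]]
    rw [Finset.sum_Ico_eq_sum_range]
    simp only [Nat.add_sub_cancel]
    rw [← geom_sum_eq hrne1 (m n), Finset.mul_sum]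
    refine Finset.sum_congr rfl fun k _ => ?_
    ring
  rw [hm_def] at hsum
  rw [hsum]
  have key : ∀ x p N : ℝ, x - 1 ≠ 0 → N ≠ 0 →
      x * (1 - p) / (N * (1 - x)) = 1 / N * (x * ((p - 1) / (x - 1))) := by
    intro x p N hx hN
    have h1x : (1 : ℝ) - x ≠ 0 := by intro h; apply hx; linarith
    field_simp
    ring
  exact key (r n) (r n ^ m n) n (sub_ne_zero.mpr hrne1) hnR
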